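/- For the closed-form ReLU-Gaussian gradient ∇F(w) = (1/2)w − (1/(2π))(‖v‖ sin(θ) ŵ + (π − θ) v) with θ = θ(w,v) ∈ [0, π − α] for some α ∈ (0, π], if w ≠ 0 and ‖w‖ ≤ ‖v‖ α³ / π⁴, then −⟨w, ∇F(w)⟩ ≥ 0. -/

import Mathlib

open Real
open scoped RealInnerProductSpace

lemma sin_ge_sub_cube' (x : ℝ) (hx : 0 ≤ x) : x - x ^ 3 / 6 ≤ Real.sin x := by
  have hd : ∀ y : ℝ, HasDerivAt (fun z : ℝ => Real.sin z - z + z ^ 3 / 6)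
      (Real.cos y - 1 + y ^ 2 / 2) y := by
    intro y
    have h1 := (Real.hasDerivAt_sin y).sub (hasDerivAt_id y)
    have h2 := (hasDerivAt_pow 3 y).div_const 6
    have h3 := h1.add h2
    refine h3.congr_deriv ?_
    push_cast
    ring
  have mono : Monotone (fun z : ℝ => Real.sin z - z + z ^ 3 / 6) := by
    apply monotone_of_deriv_nonneg
    · intro y
      exact (hd y).differentiableAt
    · intro y
      rw [(hd y).deriv]
      nlinarith [Real.one_sub_sq_div_two_le_cos (x := y)]
  have := mono hx
  simp only [Real.sin_zero] at this
  norm_num at this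
  linarith

lemma sin_sub_mul_cos_ge (x : ℝ) (hx0 : 0 ≤ x) (hxpi : x ≤ π) :
    x ^ 3 / π ^ 3 ≤ Real.sin x - x * Real.cos x := by
  have hπ0 : (0:ℝ) < π := Real.pi_pos
  have hsin := sin_ge_sub_cube' x hx0
  have hcos : Real.cos x ≤ 1 - 2 / π ^ 2 * x ^ 2 :=
    Real.cos_le_one_sub_mul_cos_sq (by rw [abs_of_nonneg hx0]; exact hxpi)
  have h6 : 6 + π ^ 3 ≤ 12 * π := by
    nlinarith [Real.pi_gt_d6, Real.pi_lt_d2]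
  have key : 1 / π ^ 3 ≤ 2 / π ^ 2 - 1 / 6 := by
    have heq : (2 / π ^ 2 - 1 / 6) - 1 / π ^ 3 = (12 * π - 6 - π ^ 3) / (6 * π ^ 3) := by
      field_simp
      ring
    have hpos : 0 ≤ (12 * π - 6 - π ^ 3) / (6 * π ^ 3) :=
      div_nonneg (by linarith) (by positivity)
    linarith
  have A : x * Real.cos x ≤ x * (1 - 2 / π ^ 2 * x ^ 2) :=
    mul_le_mul_of_nonneg_left hcos hx0
  have B : x ^ 3 * (1 / π ^ 3) ≤ x ^ 3 * (2 / π ^ 2 - 1 / 6) :=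
    mul_le_mul_of_nonneg_left key (pow_nonneg hx0 3)
  have C : x ^ 3 * (2 / π ^ 2 - 1 / 6) = (x - x ^ 3 / 6) - x * (1 - 2 / π ^ 2 * x ^ 2) := by
    ring
  have D : x ^ 3 / π ^ 3 = x ^ 3 * (1 / π ^ 3) := by ring
  linarith

theorem stmt_13 (d : ℕ) (w v g : EuclideanSpace ℝ (Fin d)) (θ α : ℝ)
    (hw : w ≠ 0) (hv : v ≠ 0) (hα : α ∈ Set.Ioc 0 π)
    (hθ : θ = Real.arccos (⟪w, v⟫ / (‖w‖ * ‖v‖)))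
    (hθα : θ ≤ π - α)
    (hg : g = (2:ℝ)⁻¹ • w -
      (2 * π)⁻¹ • ((‖v‖ * Real.sin θ) • (‖w‖⁻¹ • w) + (π - θ) • v))
    (hnorm : ‖w‖ ≤ ‖v‖ * α ^ 3 / π ^ 4) :
    -⟪w, g⟫ ≥ 0 := by
  have hπ0 : (0:ℝ) < π := Real.pi_pos
  have hw0 : (0:ℝ) < ‖w‖ := norm_pos_iff.mpr hw
  have hv0 : (0:ℝ) < ‖v‖ := norm_pos_iff.mpr hv
  have habs : |⟪w, v⟫ / (‖w‖ * ‖v‖)| ≤ 1 := abs_real_inner_div_norm_mul_norm_le_one w v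
  obtain ⟨hab1, hab2⟩ := abs_le.mp habs
  have hcosθ : Real.cos θ = ⟪w, v⟫ / (‖w‖ * ‖v‖) := by
    rw [hθ]; exact Real.cos_arccos hab1 hab2
  have hwv : ⟪w, v⟫ = ‖w‖ * ‖v‖ * Real.cos θ := by
    rw [hcosθ]; field_simp
  have hθ0 : 0 ≤ θ := hθ ▸ Real.arccos_nonneg _
  have hθπ : θ ≤ π := hθ ▸ Real.arccos_le_pi _
  have hα0 : 0 < α := hα.1
  -- key trig inequality
  have hα3 : α ^ 3 / π ^ 3 ≤ Real.sin θ + (π - θ) * Real.cos θ := by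
    have h1 := sin_sub_mul_cos_ge (π - θ) (by linarith) (by linarith)
    rw [Real.sin_pi_sub, Real.cos_pi_sub] at h1
    have h2 : α ^ 3 ≤ (π - θ) ^ 3 := by
      apply pow_le_pow_left₀ hα0.le
      linarith
    have h3 : α ^ 3 / π ^ 3 ≤ (π - θ) ^ 3 / π ^ 3 := by gcongr
    nlinarith [h1, h3]
  have hS : π * ‖w‖ ≤ ‖v‖ * (Real.sin θ + (π - θ) * Real.cos θ) := by
    have h4 : π * ‖w‖ ≤ π * (‖v‖ * α ^ 3 / π ^ 4) :=
      mul_le_mul_of_nonneg_left hnorm hπ0.le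
    have h5 : π * (‖v‖ * α ^ 3 / π ^ 4) = ‖v‖ * (α ^ 3 / π ^ 3) := by
      field_simp
    have h6 : ‖v‖ * (α ^ 3 / π ^ 3) ≤ ‖v‖ * (Real.sin θ + (π - θ) * Real.cos θ) :=
      mul_le_mul_of_nonneg_left hα3 hv0.le
    linarith
  have hinner : ⟪w, g⟫ = 2⁻¹ * ‖w‖ ^ 2 -
      (2 * π)⁻¹ * ((‖v‖ * Real.sin θ) * (‖w‖⁻¹ * ‖w‖ ^ 2) + (π - θ) * (‖w‖ * ‖v‖ * Real.cos θ)) := by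
    rw [hg]
    simp only [inner_sub_right, inner_add_right, real_inner_smul_right,
      real_inner_self_eq_norm_sq]
    rw [hwv]
  have expand : -⟪w, g⟫ = (2 * π)⁻¹ * ‖w‖ *
      (‖v‖ * (Real.sin θ + (π - θ) * Real.cos θ) - π * ‖w‖) := by
    rw [hinner]
    field_simp
    ring
  rw [expand]
  apply mul_nonneg (mul_nonneg (by positivity) hw0.le)
  linarith
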